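/- Let n ≥ 1 and let R be a unital ring with index of nilpotence at most n, i.e., every x ∈ R with x^(n+1) = 0 satisfies x^n = 0. Suppose a, e₀, e₁, …, e_n ∈ R are pairwise orthogonal idempotents with 1 = a + e₀ + e₁ + ⋯ + e_n, and the idempotents e₀, …, e_n are pairwise Murray–von Neumann equivalent. Then e_i = 0 for every i. (This is the first assertion of Lemma 4.3: the class of 1 has index at most n in V(R).) -/

import Mathlib

private theorem aux43 {R : Type*} [Ring R] (n : ℕ)
    (hnil : ∀ x : R, x ^ (n + 1) = 0 → x ^ n = 0)
    (a : R) (f : ℕ → R)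
    (hf : ∀ i, f i * f i = f i)
    (hfa : ∀ i, f i * a = 0)
    (hff : ∀ i j, i ≠ j → f i * f j = 0)
    (hone : (1 : R) = a + ∑ i ∈ Finset.range (n + 1), f i)
    (x y : ℕ → R)
    (hy0 : ∀ i, n ≤ i → y i = 0)
    (hxy : ∀ i, i < n → x i * y i = f i)
    (hyl : ∀ i, i < n → f (i + 1) * y i = y i)
    (hyr : ∀ i, i < n → y i * f i = y i) :
    f 0 = 0 := by
  classical
  set s : R := ∑ i ∈ Finset.range n, y i with hs
  have hyf : ∀ i j, i ≠ j → i < n → y i * f j = 0 := fun i j hij hi => by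
    rw [← hyr i hi, mul_assoc, hff i j hij, mul_zero]
  have hsf : ∀ m, s * f m = if m < n then y m else 0 := by
    intro m
    rw [hs, Finset.sum_mul]
    split
    · next h =>
      rw [Finset.sum_eq_single m]
      · exact hyr m h
      · intro b hb hbm; exact hyf b m hbm (Finset.mem_range.mp hb)
      · intro hm; exact absurd (Finset.mem_range.mpr h) hm
    · next h =>
      refine Finset.sum_eq_zero fun i hi => ?_
      have hi' := Finset.mem_range.mp hi
      exact hyf i m (by omega) hi'
  set Y : ℕ → ℕ → R := fun j k => Nat.rec (f j) (fun k acc => y (j + k) * acc) k with hY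
  have hY0 : ∀ j, Y j 0 = f j := fun j => rfl
  have hYs : ∀ j k, Y j (k + 1) = y (j + k) * Y j k := fun j k => rfl
  have claimC : ∀ k j, s ^ k * f j = Y j k ∧ f (j + k) * Y j k = Y j k := by
    intro k
    induction k with
    | zero => intro j; simpa [hY0] using hf j
    | succ k ih =>
      intro j
      have h1 : s ^ (k + 1) * f j = (s * f (j + k)) * Y j k := by
        conv_lhs => rw [pow_succ', mul_assoc, (ih j).1, ← (ih j).2]
        rw [← mul_assoc]
      rw [hsf] at h1
      by_cases hjk : j + k < n
      · rw [if_pos hjk] at h1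
        constructor
        · rw [h1, hYs]
        · rw [hYs, ← mul_assoc, show j + (k + 1) = (j + k) + 1 by ring, hyl _ hjk]
      · rw [if_neg hjk, zero_mul] at h1
        have hz : Y j (k + 1) = 0 := by
          rw [hYs, hy0 (j + k) (by omega), zero_mul]
        rw [hz, h1]
        simp
  have hsa : s * a = 0 := by
    rw [hs, Finset.sum_mul]
    exact Finset.sum_eq_zero fun i hi => by
      rw [← hyr i (Finset.mem_range.mp hi), mul_assoc, hfa, mul_zero]
  have hsn1 : s ^ (n + 1) = 0 := by
    have h2 : s ^ (n + 1) * a = 0 := by rw [pow_succ, mul_assoc, hsa, mul_zero]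
    have h3 : ∑ j ∈ Finset.range (n + 1), s ^ (n + 1) * f j = 0 :=
      Finset.sum_eq_zero fun j _ => by
        rw [(claimC (n + 1) j).1, hYs, hy0 (j + n) (by omega), zero_mul]
    calc s ^ (n + 1) = s ^ (n + 1) * a + ∑ j ∈ Finset.range (n + 1), s ^ (n + 1) * f j := by
          rw [← Finset.mul_sum, ← mul_add, ← hone, mul_one]
      _ = 0 := by rw [h2, h3, add_zero]
  have hsn : s ^ n = 0 := hnil s hsn1
  have hYn : Y 0 n = 0 := by rw [← (claimC n 0).1, hsn, zero_mul]
  set X : ℕ → R := fun k => Nat.rec (f 0) (fun k acc => acc * x k) k with hX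
  have hXs : ∀ k, X (k + 1) = X k * x k := fun k => rfl
  have claimF : ∀ k, k ≤ n → X k * Y 0 k = f 0 := by
    intro k
    induction k with
    | zero => intro _; exact hf 0
    | succ k ih =>
      intro hk
      have hkn : k < n := hk
      have h2 : f k * Y 0 k = Y 0 k := by
        have := (claimC k 0).2
        rwa [zero_add] at this
      rw [hXs, hYs, zero_add, mul_assoc, ← mul_assoc (x k), hxy k hkn, h2]
      exact ih (le_of_lt hkn)
  have := claimF n le_rfl
  rw [hYn, mul_zero] at this
  exact this.symm

/-- **First assertion of Lemma 4.3.** Let `n ≥ 1` and let `R` be a unital ring with index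
of nilpotence at most `n` (every `x` with `x^(n+1) = 0` satisfies `x^n = 0`). If
`a, e₀, …, e_n` are pairwise orthogonal idempotents with `1 = a + e₀ + ⋯ + e_n` and the
`e_i` are pairwise Murray–von Neumann equivalent, then every `e_i` is zero. -/
theorem stmt1 {R : Type*} [Ring R] (n : ℕ) (hn : 1 ≤ n)
    (hnil : ∀ x : R, x ^ (n + 1) = 0 → x ^ n = 0)
    (a : R) (e : Fin (n + 1) → R)
    (ha : a * a = a) (he : ∀ i, e i * e i = e i)
    (hae : ∀ i, a * e i = 0) (hea : ∀ i, e i * a = 0)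
    (hee : ∀ i j, i ≠ j → e i * e j = 0)
    (hsum : (1 : R) = a + ∑ i, e i)
    (hequiv : ∀ i j, ∃ x y : R, e i = x * y ∧ e j = y * x) :
    ∀ i, e i = 0 := by
  classical
  set f : ℕ → R := fun i => if h : i < n + 1 then e ⟨i, h⟩ else 0 with hfdef
  have hfe : ∀ (i : ℕ) (h : i < n + 1), f i = e ⟨i, h⟩ := fun i h => dif_pos h
  have hf : ∀ i, f i * f i = f i := by
    intro i
    by_cases h : i < n + 1
    · rw [hfe i h]; exact he _
    · simp [hfdef, h, show ¬ i ≤ n by omega]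
  have hfa : ∀ i, f i * a = 0 := by
    intro i
    by_cases h : i < n + 1
    · rw [hfe i h]; exact hea _
    · simp [hfdef, h, show ¬ i ≤ n by omega]
  have hff : ∀ i j, i ≠ j → f i * f j = 0 := by
    intro i j hij
    by_cases h : i < n + 1
    · by_cases h' : j < n + 1
      · rw [hfe i h, hfe j h']
        exact hee _ _ (by simp [Fin.ext_iff]; omega)
      · simp [hfdef, h', mul_zero, show ¬ j ≤ n by omega]
    · simp [hfdef, h, show ¬ i ≤ n by omega]
  have hone : (1 : R) = a + ∑ i ∈ Finset.range (n + 1), f i := by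
    rw [hsum]
    congr 1
    rw [← Fin.sum_univ_eq_sum_range (fun i => f i) (n + 1)]
    exact Finset.sum_congr rfl fun i _ => by rw [hfe i.1 i.2]
  -- choose normalized partial isometries
  have hcons : ∀ i, i < n → ∃ u v : R, f i = u * v ∧ f (i + 1) = v * u := by
    intro i hi
    obtain ⟨u, v, h1, h2⟩ := hequiv ⟨i, by omega⟩ ⟨i + 1, by omega⟩
    exact ⟨u, v, by rw [hfe i (by omega)]; exact h1, by rw [hfe (i+1) (by omega)]; exact h2⟩
  choose! u v hu hv using hcons
  set x : ℕ → R := fun i => if i < n then u i * f (i + 1) else 0 with hxdef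
  set y : ℕ → R := fun i => if i < n then f (i + 1) * v i else 0 with hydef
  have hy0 : ∀ i, n ≤ i → y i = 0 := fun i h => by simp [hydef, Nat.not_lt.mpr h]
  have huv : ∀ i, i < n → (u i * v i) * (u i * v i) = u i * v i := by
    intro i hi
    rw [← hu i hi]; exact hf i
  have hxy : ∀ i, i < n → x i * y i = f i := by
    intro i hi
    simp only [hxdef, hydef, if_pos hi]
    rw [mul_assoc, ← mul_assoc (f (i+1)), hf, hv i hi, hu i hi,
      show u i * (v i * u i * v i) = (u i * v i) * (u i * v i) by simp only [mul_assoc],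
      huv i hi]
  have hyl : ∀ i, i < n → f (i + 1) * y i = y i := by
    intro i hi
    simp only [hydef, if_pos hi]
    rw [← mul_assoc, hf]
  have hyr : ∀ i, i < n → y i * f i = y i := by
    intro i hi
    simp only [hydef, if_pos hi]
    rw [hv i hi, hu i hi]
    calc (v i * u i * v i) * (u i * v i)
        = v i * ((u i * v i) * (u i * v i)) := by simp only [mul_assoc]
      _ = v i * (u i * v i) := by rw [huv i hi]
      _ = v i * u i * v i := by simp only [mul_assoc]
  have h0 : f 0 = 0 := aux43 n hnil a f hf hfa hff hone x y hy0 hxy hyl hyr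
  rw [hfe 0 (by omega)] at h0
  intro i
  obtain ⟨p, q, h1, h2⟩ := hequiv ⟨0, by omega⟩ i
  have hpq : p * q = 0 := by rw [← h1, h0]
  have : e i = e i * e i := (he i).symm
  rw [this, h2, mul_assoc, ← mul_assoc p, hpq, zero_mul, mul_zero]
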